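/- For any positive proper fraction r, the space fdf = {x : Δ^(r)x is almost convergent} is a Banach space under the norm ‖x‖ = sup_{m,n} |t_{mn}(Δ^(r)x)|, where t_{mn}(y) = (1/(m+1)) Σ_{i=0}^m y_{n+i}. -/

import Mathlib

open Filter

/-- The Cesàro-type mean `t_{mn}(x) = (1/(m+1)) ∑_{i=0}^m x_{n+i}`. -/
noncomputable def tmn (x : ℕ → ℝ) (m n : ℕ) : ℝ :=
  (1 / (m + 1 : ℝ)) * ∑ i ∈ Finset.range (m + 1), x (n + i)

/-- `x` is almost convergent to `L`: `t_{mn}(x) → L` as `m → ∞`, uniformly in `n`. -/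
def AlmostConvergentTo (x : ℕ → ℝ) (L : ℝ) : Prop :=
  TendstoUniformly (fun m n => tmn x m n) (fun _ => L) atTop

/-- The space `f` of almost convergent sequences (bounded and almost convergent). -/
def FSet : Set (ℕ → ℝ) :=
  {x | (∃ C, ∀ k, |x k| ≤ C) ∧ ∃ L, AlmostConvergentTo x L}

/-- Generalized binomial coefficient `C(r, m) = r(r-1)⋯(r-m+1)/m!` for real `r`. -/
noncomputable def genBinom (r : ℝ) (m : ℕ) : ℝ :=
  (∏ i ∈ Finset.range m, (r - i)) / (Nat.factorial m : ℝ)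

/-- The fractional difference operator `(Δ^(r)x)_n = ∑_{i=0}^n (-1)^i C(r,i) x_{n-i}`. -/
noncomputable def deltaOp (r : ℝ) (x : ℕ → ℝ) (n : ℕ) : ℝ :=
  ∑ i ∈ Finset.range (n + 1), (-1 : ℝ) ^ i * genBinom r i * x (n - i)

/-- The space `fdf` of sequences whose `Δ^(r)`-transform is almost convergent. -/
def fdf (r : ℝ) : Set (ℕ → ℝ) := {x | deltaOp r x ∈ FSet}

lemma tmn_bound {z : ℕ → ℝ} {C : ℝ} (h : ∀ k, |z k| ≤ C) (m n : ℕ) : |tmn z m n| ≤ C := by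
  have hC : 0 ≤ C := le_trans (abs_nonneg _) (h 0)
  unfold tmn
  rw [abs_mul, abs_of_pos (by positivity : (0:ℝ) < 1/(m+1))]
  calc (1/(m+1:ℝ)) * |∑ i ∈ Finset.range (m+1), z (n+i)|
      ≤ (1/(m+1)) * ∑ i ∈ Finset.range (m+1), |z (n+i)| := by
        gcongr
        exact Finset.abs_sum_le_sum_abs _ _
    _ ≤ (1/(m+1)) * ∑ _i ∈ Finset.range (m+1), C := by
        gcongr with i _
        exact h _
    _ = (1/(m+1)) * ((m+1) * C) := by
        rw [Finset.sum_const, Finset.card_range, nsmul_eq_mul]; push_cast; ring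
    _ = C := by field_simp

lemma tmn_sub (a b : ℕ → ℝ) (m n : ℕ) : tmn (a - b) m n = tmn a m n - tmn b m n := by
  simp [tmn, Finset.sum_sub_distrib, mul_sub]

lemma tmn_zero (z : ℕ → ℝ) (k : ℕ) : tmn z 0 k = z k := by
  simp [tmn]

lemma deltaOp_sub (r : ℝ) (a b : ℕ → ℝ) : deltaOp r (a - b) = deltaOp r a - deltaOp r b := by
  funext n
  simp [deltaOp, Finset.sum_sub_distrib, mul_sub]

/-- Solve `deltaOp r x = y` for `x` by forward substitution. -/
noncomputable def invDelta (r : ℝ) (y : ℕ → ℝ) : ℕ → ℝ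
  | n => y n - ∑ i ∈ (Finset.Ico 1 (n+1)).attach,
      (-1:ℝ)^(i:ℕ) * genBinom r i * invDelta r y (n - i)
  termination_by n => n
  decreasing_by
    have := Finset.mem_Ico.mp i.2
    omega

lemma genBinom_zero (r : ℝ) : genBinom r 0 = 1 := by simp [genBinom]

lemma deltaOp_invDelta (r : ℝ) (y : ℕ → ℝ) : deltaOp r (invDelta r y) = y := by
  funext n
  rw [deltaOp, Finset.range_eq_Ico, Finset.sum_eq_sum_Ico_succ_bot (by omega)]
  simp only [pow_zero, genBinom_zero, one_mul, Nat.sub_zero]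
  rw [invDelta]
  rw [Finset.sum_attach (Finset.Ico 1 (n+1))
    (fun i => (-1:ℝ)^i * genBinom r i * invDelta r y (n - i))]
  ring

theorem fdf_banach_space (r : ℝ) (hr0 : 0 < r) (hr1 : r < 1) :
    (∀ x ∈ fdf r, BddAbove (Set.range fun p : ℕ × ℕ => |tmn (deltaOp r x) p.1 p.2|)) ∧
    (∀ X : ℕ → ℕ → ℝ, (∀ j, X j ∈ fdf r) →
      (∀ ε > (0 : ℝ), ∃ N, ∀ i ≥ N, ∀ j ≥ N,
        (⨆ p : ℕ × ℕ, |tmn (deltaOp r (X i - X j)) p.1 p.2|) < ε) →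
      ∃ x ∈ fdf r, ∀ ε > (0 : ℝ), ∃ N, ∀ j ≥ N,
        (⨆ p : ℕ × ℕ, |tmn (deltaOp r (X j - x)) p.1 p.2|) < ε) := by
  constructor
  · rintro x ⟨⟨C, hC⟩, -⟩
    refine ⟨C, ?_⟩
    rintro v ⟨p, rfl⟩
    exact tmn_bound hC p.1 p.2
  · intro X hX hCau
    have hbdd : ∀ j, ∃ C, ∀ k, |deltaOp r (X j) k| ≤ C := fun j => (hX j).1
    have hbddsub : ∀ i j, ∃ C, ∀ k, |(deltaOp r (X i) - deltaOp r (X j)) k| ≤ C := by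
      intro i j
      obtain ⟨Ci, hCi⟩ := hbdd i; obtain ⟨Cj, hCj⟩ := hbdd j
      refine ⟨Ci + Cj, fun k => ?_⟩
      have habs : |deltaOp r (X i) k - deltaOp r (X j) k|
          ≤ |deltaOp r (X i) k| + |deltaOp r (X j) k| := by
        calc |deltaOp r (X i) k - deltaOp r (X j) k|
            = |deltaOp r (X i) k + -(deltaOp r (X j) k)| := by rw [sub_eq_add_neg]
          _ ≤ |deltaOp r (X i) k| + |-(deltaOp r (X j) k)| := abs_add_le _ _
          _ = |deltaOp r (X i) k| + |deltaOp r (X j) k| := by rw [abs_neg]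
      simpa using habs.trans (add_le_add (hCi k) (hCj k))
    -- key uniform Cauchy estimate
    have key : ∀ ε > (0:ℝ), ∃ N, ∀ i ≥ N, ∀ j ≥ N, ∀ m n,
        |tmn (deltaOp r (X i) - deltaOp r (X j)) m n| < ε := by
      intro ε hε
      obtain ⟨N, hN⟩ := hCau ε hε
      refine ⟨N, fun i hi j hj m n => ?_⟩
      obtain ⟨C, hC⟩ := hbddsub i j
      have hb : BddAbove (Set.range fun p : ℕ × ℕ =>
          |tmn (deltaOp r (X i - X j)) p.1 p.2|) := by
        refine ⟨C, ?_⟩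
        rintro v ⟨p, rfl⟩
        rw [deltaOp_sub]
        exact tmn_bound hC p.1 p.2
      have h2 := le_ciSup hb (m, n)
      have h3 := lt_of_le_of_lt h2 (hN i hi j hj)
      rwa [deltaOp_sub] at h3
    -- pointwise limits
    have hptCauchy : ∀ k, CauchySeq (fun j => deltaOp r (X j) k) := by
      intro k
      rw [Metric.cauchySeq_iff]
      intro ε hε
      obtain ⟨N, hN⟩ := key ε hε
      refine ⟨N, fun i hi j hj => ?_⟩
      have := hN i hi j hj 0 k
      rw [tmn_zero] at this
      simpa [Real.dist_eq] using this
    have hconv : ∀ k, ∃ l, Tendsto (fun j => deltaOp r (X j) k) atTop (nhds l) :=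
      fun k => cauchySeq_tendsto_of_complete (hptCauchy k)
    choose Y hY using hconv
    -- uniform convergence to Y
    have hunif : ∀ ε > (0:ℝ), ∃ N, ∀ j ≥ N, ∀ k, |deltaOp r (X j) k - Y k| ≤ ε := by
      intro ε hε
      obtain ⟨N, hN⟩ := key ε hε
      refine ⟨N, fun j hj k => ?_⟩
      have h2 : Tendsto (fun i => |deltaOp r (X j) k - deltaOp r (X i) k|) atTop
          (nhds |deltaOp r (X j) k - Y k|) :=
        (tendsto_const_nhds.sub (hY k)).abs
      refine le_of_tendsto h2 ?_
      filter_upwards [eventually_ge_atTop N] with i hi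
      have := hN j hj i hi 0 k
      rw [tmn_zero] at this
      simpa using this.le
    -- Y is bounded
    obtain ⟨N1, hN1⟩ := hunif 1 one_pos
    obtain ⟨C0, hC0⟩ := hbdd N1
    have hYbdd : ∀ k, |Y k| ≤ C0 + 1 := by
      intro k
      have h1 := hN1 N1 le_rfl k
      have h2 := hC0 k
      have h3 : |Y k| = |(Y k - deltaOp r (X N1) k) + deltaOp r (X N1) k| := by ring_nf
      rw [h3]
      have h4 := abs_add_le (Y k - deltaOp r (X N1) k) (deltaOp r (X N1) k)
      have h5 : |Y k - deltaOp r (X N1) k| = |deltaOp r (X N1) k - Y k| := abs_sub_comm _ _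
      linarith
    -- almost convergent limits L j
    have hLex : ∀ j, ∃ L, AlmostConvergentTo (deltaOp r (X j)) L := fun j => (hX j).2
    choose L hL using hLex
    have hLt : ∀ j n, Tendsto (fun m => tmn (deltaOp r (X j)) m n) atTop (nhds (L j)) :=
      fun j n => (hL j).tendsto_at n
    have hLC : CauchySeq L := by
      rw [Metric.cauchySeq_iff]
      intro ε hε
      obtain ⟨N, hN⟩ := key (ε/2) (by linarith)
      refine ⟨N, fun i hi j hj => ?_⟩
      have ht : Tendsto (fun m => tmn (deltaOp r (X i)) m 0 - tmn (deltaOp r (X j)) m 0)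
          atTop (nhds (L i - L j)) := (hLt i 0).sub (hLt j 0)
      have hle : |L i - L j| ≤ ε/2 := by
        refine le_of_tendsto ht.abs ?_
        filter_upwards with m
        have := hN i hi j hj m 0
        rw [tmn_sub] at this
        exact this.le
      rw [Real.dist_eq]
      linarith
    obtain ⟨Llim, hLlim⟩ := cauchySeq_tendsto_of_complete hLC
    -- Y almost converges to Llim
    have hYac : AlmostConvergentTo Y Llim := by
      refine Metric.tendstoUniformly_iff.mpr ?_
      intro ε hε
      obtain ⟨N2, hN2⟩ := hunif (ε/4) (by linarith)
      obtain ⟨M, hM⟩ := Metric.tendsto_atTop.mp hLlim (ε/4) (by linarith)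
      set j := max N2 M with hjdef
      have hj1 : N2 ≤ j := le_max_left _ _
      have hj2 : dist (L j) Llim < ε/4 := hM j (le_max_right _ _)
      have h3 := Metric.tendstoUniformly_iff.mp (hL j) (ε/4) (by linarith)
      filter_upwards [h3] with m hm n
      have e1 : |tmn (deltaOp r (X j)) m n - tmn Y m n| ≤ ε/4 := by
        rw [← tmn_sub]
        exact tmn_bound (fun k => by simpa using hN2 j hj1 k) m n
      have e2 : |L j - tmn (deltaOp r (X j)) m n| < ε/4 := by
        have := hm n
        rwa [Real.dist_eq] at this
      rw [Real.dist_eq] at hj2 ⊢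
      have t1 := abs_sub_le Llim (L j) (tmn Y m n)
      have t2 := abs_sub_le (L j) (tmn (deltaOp r (X j)) m n) (tmn Y m n)
      have t3 : |Llim - L j| = |L j - Llim| := abs_sub_comm _ _
      linarith
    -- candidate limit x
    refine ⟨invDelta r Y, ?_, ?_⟩
    · show deltaOp r (invDelta r Y) ∈ FSet
      rw [deltaOp_invDelta]
      exact ⟨⟨C0 + 1, hYbdd⟩, ⟨Llim, hYac⟩⟩
    · intro ε hε
      obtain ⟨N, hN⟩ := hunif (ε/2) (by linarith)
      refine ⟨N, fun j hj => ?_⟩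
      have hb : ∀ p : ℕ × ℕ, |tmn (deltaOp r (X j - invDelta r Y)) p.1 p.2| ≤ ε/2 := by
        intro p
        rw [deltaOp_sub, deltaOp_invDelta]
        exact tmn_bound (fun k => by simpa using hN j hj k) p.1 p.2
      calc (⨆ p : ℕ × ℕ, |tmn (deltaOp r (X j - invDelta r Y)) p.1 p.2|)
          ≤ ε/2 := ciSup_le hb
        _ < ε := by linarith
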